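/- Let d₁,…,d_p be positive numbers with D = diag(d₁,…,d_p), let λ₁ ≥ … ≥ λ_p ≥ 0, and for y ∈ ℝ^p let b*(y) be the unique minimizer of f(b) = ½‖y − Db‖₂² + J_λ(b) over ℝ^p, and let R(b*(y)) denote the number of nonzero entries of b*(y). Then for every index i ∈ {1,…,p} and every integer r ≥ 1, the set of y ∈ ℝ^p such that (b*(y))_i ≠ 0 and R(b*(y)) = r is equal to the set of y ∈ ℝ^p such that d_i|y_i| > λ_r and R(b*(y)) = r. -/

import Mathlib

/-- The nonincreasing rearrangement of the absolute values of the coordinates of `b`. -/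
noncomputable def sortedAbs {p : ℕ} (b : Fin p → ℝ) : Fin p → ℝ :=
  fun i => |b (Tuple.sort (fun j => |b j|) (Fin.rev i))|

/-- The sorted ℓ₁ norm `J_λ(b) = Σ_i λ_i |b|_{(i)}`. -/
noncomputable def Jlam {p : ℕ} (lam b : Fin p → ℝ) : ℝ :=
  ∑ i, lam i * sortedAbs b i

/-- The SLOPE objective with diagonal design matrix `D = diag(d₁,…,d_p)`:
`f(b) = ½ ‖y − D b‖₂² + J_λ(b)`. -/
noncomputable def slopeObj {p : ℕ} (d y lam : Fin p → ℝ) (b : Fin p → ℝ) : ℝ :=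
  (1 / 2) * ∑ i, (y i - d i * b i) ^ 2 + Jlam lam b


namespace SlopeAux

variable {p : ℕ}

/-- The permutation realizing the nonincreasing rearrangement. -/
noncomputable def sperm (b : Fin p → ℝ) : Equiv.Perm (Fin p) :=
  (Fin.revPerm).trans (Tuple.sort (fun j => |b j|))

lemma sortedAbs_eq (b : Fin p → ℝ) (i : Fin p) : sortedAbs b i = |b (sperm b i)| := rfl

lemma sortedAbs_antitone (b : Fin p → ℝ) : Antitone (sortedAbs b) := by
  intro i j hij
  have h := Tuple.monotone_sort (fun j => |b j|) (Fin.rev_le_rev.mpr hij)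
  simpa [sortedAbs, Function.comp] using h

lemma Jlam_eq (lam b : Fin p → ℝ) : Jlam lam b = ∑ k, lam k * |b (sperm b k)| := rfl

lemma sortedAbs_nonneg (b : Fin p → ℝ) (i : Fin p) : 0 ≤ sortedAbs b i := abs_nonneg _

lemma sum_perm_le (lam : Fin p → ℝ) (hlam_anti : ∀ i j : Fin p, i ≤ j → lam j ≤ lam i)
    (b : Fin p → ℝ) (σ : Equiv.Perm (Fin p)) :
    ∑ k, lam k * |b (σ k)| ≤ Jlam lam b := by
  have hmono : Monovary lam (sortedAbs b) := by
    intro i j hij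
    have hji : j < i := by
      by_contra h
      exact absurd (sortedAbs_antitone b (not_lt.mp h)) (not_le.mpr hij)
    exact hlam_anti j i hji.le
  have h := hmono.sum_mul_comp_perm_le_sum_mul (σ := σ.trans (sperm b)⁻¹)
  calc ∑ k, lam k * |b (σ k)|
      = ∑ k, lam k * sortedAbs b ((σ.trans (sperm b)⁻¹) k) := by
        apply Finset.sum_congr rfl
        intro k _
        simp [sortedAbs_eq]
    _ ≤ ∑ k, lam k * sortedAbs b k := h
    _ = Jlam lam b := rfl

lemma rank_lt_card (b : Fin p → ℝ) (j : Fin p) (h : sortedAbs b j ≠ 0) :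
    (j : ℕ) < (Finset.univ.filter fun k => b k ≠ 0).card := by
  have hcard : (Finset.Iic j).card ≤ (Finset.univ.filter fun k => b k ≠ 0).card := by
    apply Finset.card_le_card_of_injOn (fun k => sperm b k)
    · intro k hk
      simp only [Finset.mem_coe, Finset.mem_Iic] at hk
      simp only [Finset.mem_coe, Finset.mem_filter, Finset.mem_univ, true_and]
      intro hzero
      have h1 : sortedAbs b j ≤ sortedAbs b k := sortedAbs_antitone b hk
      have h2 : sortedAbs b k = 0 := by rw [sortedAbs_eq, hzero, abs_zero]
      have := le_antisymm (h2 ▸ h1) (sortedAbs_nonneg b j)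
      exact h this
    · intro a _ c _ hac
      exact (sperm b).injective hac
  rw [Fin.card_Iic] at hcard
  omega

lemma card_le_rank (b : Fin p → ℝ) (j : Fin p) (S : Finset (Fin p))
    (hS : ∀ k ∈ S, sortedAbs b j < |b k|) : S.card ≤ (j : ℕ) := by
  have hcard : S.card ≤ (Finset.Iio j).card := by
    apply Finset.card_le_card_of_injOn (fun k => (sperm b)⁻¹ k)
    · intro k hk
      simp only [Finset.mem_coe, Finset.mem_Iio]
      have h1 : sortedAbs b j < sortedAbs b ((sperm b)⁻¹ k) := by
        rw [sortedAbs_eq b ((sperm b)⁻¹ k), (by exact Equiv.apply_symm_apply (sperm b) k : (sperm b) ((sperm b)⁻¹ k) = k)]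
        exact (sortedAbs_eq b j) ▸ hS k hk
      by_contra h
      exact absurd (sortedAbs_antitone b (not_lt.mp h)) (not_le.mpr h1)
    · intro a _ c _ hac
      exact (sperm b)⁻¹.injective hac
  rwa [Fin.card_Iio] at hcard

lemma Jlam_update_le (lam : Fin p → ℝ) (hlam_anti : ∀ i j : Fin p, i ≤ j → lam j ≤ lam i)
    (b : Fin p → ℝ) (i : Fin p) (a : ℝ) :
    Jlam lam (Function.update b i a) ≤
      Jlam lam b + lam ((sperm (Function.update b i a))⁻¹ i) * (|a| - |b i|) := by
  set b' := Function.update b i a with hb'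
  set j' : Fin p := (sperm b')⁻¹ i with hj'
  have hσj' : sperm b' j' = i := Equiv.apply_symm_apply _ _
  have key : ∀ k : Fin p, lam k * |b' (sperm b' k)| =
      lam k * |b (sperm b' k)| + (if k = j' then lam j' * (|a| - |b i|) else 0) := by
    intro k
    by_cases hk : k = j'
    · subst hk
      rw [hσj']
      simp [hb', Function.update_self]
      ring
    · have hne : sperm b' k ≠ i := by
        intro h
        exact hk (by rw [hj', ← h, (by exact Equiv.symm_apply_apply (sperm b') k : (sperm b')⁻¹ (sperm b' k) = k)])
      have heq : b' (sperm b' k) = b (sperm b' k) := Function.update_of_ne hne a b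
      rw [if_neg hk, heq]
      ring
  calc Jlam lam b' = ∑ k, lam k * |b' (sperm b' k)| := Jlam_eq lam b'
    _ = ∑ k, (lam k * |b (sperm b' k)| + (if k = j' then lam j' * (|a| - |b i|) else 0)) :=
        Finset.sum_congr rfl (fun k _ => key k)
    _ = (∑ k, lam k * |b (sperm b' k)|) + lam j' * (|a| - |b i|) := by
        rw [Finset.sum_add_distrib, Finset.sum_ite_eq' Finset.univ j']
        simp
    _ ≤ Jlam lam b + lam j' * (|a| - |b i|) := by
        have := sum_perm_le lam hlam_anti b (sperm b')
        linarith

lemma sum_sq_update (y d b : Fin p → ℝ) (i : Fin p) (a : ℝ) :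
    ∑ k, (y k - d k * (Function.update b i a k)) ^ 2 =
      (∑ k, (y k - d k * b k) ^ 2) + ((y i - d i * a) ^ 2 - (y i - d i * b i) ^ 2) := by
  have key : ∀ k : Fin p, (y k - d k * (Function.update b i a k)) ^ 2 =
      (y k - d k * b k) ^ 2 + (if k = i then (y i - d i * a) ^ 2 - (y i - d i * b i) ^ 2 else 0) := by
    intro k
    by_cases hk : k = i
    · subst hk; simp [Function.update_self]
    · rw [if_neg hk, Function.update_of_ne hk]; ring
  rw [Finset.sum_congr rfl (fun k _ => key k), Finset.sum_add_distrib,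
    Finset.sum_ite_eq' Finset.univ i]
  simp

lemma slopeObj_update_le (d y lam : Fin p → ℝ)
    (hlam_anti : ∀ i j : Fin p, i ≤ j → lam j ≤ lam i)
    (b : Fin p → ℝ) (i : Fin p) (a : ℝ) :
    slopeObj d y lam (Function.update b i a) ≤
      slopeObj d y lam b + (1/2) * ((y i - d i * a) ^ 2 - (y i - d i * b i) ^ 2)
        + lam ((sperm (Function.update b i a))⁻¹ i) * (|a| - |b i|) := by
  have h1 := Jlam_update_le lam hlam_anti b i a
  have h2 := sum_sq_update y d b i a
  simp only [slopeObj]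
  rw [h2]
  linarith



end SlopeAux

open SlopeAux

/-- Lemma 2 of the appendix.  For the diagonal SLOPE problem, denote by `b*(y)` the unique
minimizer and by `R(b*(y))` its number of nonzero entries.  For every index `i` and every
`r ≥ 1` (encoded as `r : Fin p`, representing the 1-indexed value `r+1 ≥ 1`; the condition
`R = r` forces `r ≤ p`), the set of `y` with `(b*(y))_i ≠ 0` and `R(b*(y)) = r` equals the set
of `y` with `d_i |y_i| > λ_r` and `R(b*(y)) = r`. -/
theorem slope_selected_iff_threshold {p : ℕ} (d lam : Fin p → ℝ)
    (hd : ∀ i, 0 < d i)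
    (hlam_anti : ∀ i j : Fin p, i ≤ j → lam j ≤ lam i)
    (hlam_nonneg : ∀ i, 0 ≤ lam i)
    (bstar : (Fin p → ℝ) → (Fin p → ℝ))
    (hbstar : ∀ y b, slopeObj d y lam (bstar y) ≤ slopeObj d y lam b)
    (i : Fin p) (r : Fin p) :
    {y : Fin p → ℝ | bstar y i ≠ 0 ∧ {k : Fin p | bstar y k ≠ 0}.ncard = (r : ℕ) + 1} =
    {y : Fin p → ℝ | lam r < d i * |y i| ∧
      {k : Fin p | bstar y k ≠ 0}.ncard = (r : ℕ) + 1} := by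
  ext y
  simp only [Set.mem_setOf_eq]
  set b := bstar y with hb
  have hncard : {k : Fin p | b k ≠ 0}.ncard
      = (Finset.univ.filter fun k => b k ≠ 0).card := by
    rw [← Set.ncard_coe_finset]
    congr 1
    ext k
    simp
  constructor
  · rintro ⟨hbi, hR⟩
    refine ⟨?_, hR⟩
    by_contra hc
    push_neg at hc
    -- hc : d i * |y i| ≤ lam r
    have hcard : (Finset.univ.filter fun k => b k ≠ 0).card = (r : ℕ) + 1 := by
      rw [← hncard]; exact hR
    set b' := Function.update b i (b i / 2) with hb'
    set j' : Fin p := (sperm b')⁻¹ i with hj'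
    have hσj' : sperm b' j' = i := Equiv.apply_symm_apply _ _
    have hb'i : b' i = b i / 2 := Function.update_self i _ b
    -- the supports of b and b' agree
    have hsupp : (Finset.univ.filter fun k => b' k ≠ 0)
        = (Finset.univ.filter fun k => b k ≠ 0) := by
      apply Finset.filter_congr
      intro k _
      by_cases hk : k = i
      · subst hk
        rw [hb'i]
        constructor
        · intro h h0; exact h (by rw [h0]; ring)
        · intro h h0
          exact h (by field_simp at h0; linarith)
      · have heq : b' k = b k := Function.update_of_ne hk _ b
        rw [heq]
    -- the rank of coordinate i in b' is at most r
    have hsj' : sortedAbs b' j' ≠ 0 := by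
      rw [sortedAbs_eq, hσj', hb'i]
      simpa using hbi
    have hrank : (j' : ℕ) < (r : ℕ) + 1 := by
      have := rank_lt_card b' j' hsj'
      rwa [hsupp, hcard] at this
    have hlamj' : lam r ≤ lam j' := hlam_anti j' r (by omega)
    -- the perturbation decreases the objective
    have hJ := slopeObj_update_le d y lam hlam_anti b i (b i / 2)
    have hmin := hbstar y b'
    rw [← hb] at hmin
    rw [← hb', ← hj'] at hJ
    have habs2 : |b i / 2| = |b i| / 2 := by
      rw [abs_div]; norm_num
    rw [habs2] at hJ
    have hcontra : (0:ℝ) ≤ (1/2) * ((y i - d i * (b i / 2)) ^ 2 - (y i - d i * b i) ^ 2)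
        + lam j' * (|b i| / 2 - |b i|) := by linarith
    have expand : (y i - d i * (b i / 2)) ^ 2 - (y i - d i * b i) ^ 2
        = d i * y i * b i - (3/4) * (d i ^ 2 * b i ^ 2) := by ring
    rw [expand] at hcontra
    have e1 : d i * y i * b i ≤ lam r * |b i| := by
      calc d i * y i * b i ≤ |d i * y i * b i| := le_abs_self _
        _ = d i * |y i| * |b i| := by
            rw [abs_mul, abs_mul, abs_of_pos (hd i)]
        _ ≤ lam r * |b i| := mul_le_mul_of_nonneg_right hc (abs_nonneg _)
    have e2 : lam r * |b i| ≤ lam j' * |b i| := mul_le_mul_of_nonneg_right hlamj' (abs_nonneg _)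
    have e3 : 0 < d i ^ 2 * b i ^ 2 :=
      mul_pos (pow_pos (hd i) 2) (pow_two_pos_of_ne_zero hbi)
    linarith
  · rintro ⟨hthr, hR⟩
    refine ⟨?_, hR⟩
    by_contra hb0
    -- hb0 : b i = 0
    have hcard : (Finset.univ.filter fun k => b k ≠ 0).card = (r : ℕ) + 1 := by
      rw [← hncard]; exact hR
    have hyabs : 0 < |y i| := by
      rcases lt_or_ge 0 (|y i|) with h | h
      · exact h
      · exfalso
        have : d i * |y i| ≤ 0 := mul_nonpos_of_nonneg_of_nonpos (hd i).le h
        linarith [hlam_nonneg r]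
    set supp := (Finset.univ.filter fun k => b k ≠ 0) with hsuppdef
    have hsuppne : supp.Nonempty := by
      rw [← Finset.card_pos, hcard]; omega
    set T := supp.image (fun k => |b k|) with hT
    have hTne : T.Nonempty := hsuppne.image _
    set m := T.min' hTne with hm
    have hmpos : 0 < m := by
      have hmem := T.min'_mem hTne
      rw [← hm] at hmem
      rw [hT] at hmem
      obtain ⟨k, hk, hkm⟩ := Finset.mem_image.mp hmem
      rw [hsuppdef, Finset.mem_filter] at hk
      rw [← hkm]
      exact abs_pos.mpr hk.2
    set ε := (d i * |y i| - lam r) / (d i) ^ 2 with hε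
    have hεpos : 0 < ε := by
      apply div_pos (by linarith) (pow_pos (hd i) 2)
    set t := min m ε / 2 with ht
    have htpos : 0 < t := by
      rw [ht]
      have : 0 < m ⊓ ε := lt_min hmpos hεpos
      linarith
    have htm : t < m := by
      rw [ht]
      have := min_le_left m ε
      linarith
    have htε : t ≤ ε / 2 := by
      rw [ht]
      have := min_le_right m ε
      linarith
    set s : ℝ := if 0 < y i then 1 else -1 with hs
    have hsabs : |s| = 1 := by
      rw [hs]; split <;> norm_num
    have hsy : s * y i = |y i| := by
      rw [hs]
      split
      · rename_i h; rw [abs_of_pos h]; ring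
      · rename_i h
        have hne : y i ≠ 0 := by intro h0; rw [h0] at hyabs; simp at hyabs
        have hneg : y i < 0 := lt_of_le_of_ne (not_lt.mp h) hne
        rw [abs_of_neg hneg]; ring
    set b' := Function.update b i (t * s) with hb'
    set j' : Fin p := (sperm b')⁻¹ i with hj'
    have hσj' : sperm b' j' = i := Equiv.apply_symm_apply _ _
    have hb'i : b' i = t * s := Function.update_self i _ b
    have habs' : |t * s| = t := by
      rw [abs_mul, hsabs, abs_of_pos htpos]; ring
    -- the rank of coordinate i in b' is at least r + 1
    have hrank : (r : ℕ) + 1 ≤ (j' : ℕ) := by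
      rw [← hcard]
      apply card_le_rank b' j' supp
      intro k hk
      rw [hsuppdef, Finset.mem_filter] at hk
      have hki : k ≠ i := by
        intro h; rw [h, hb0] at hk; exact hk.2 rfl
      have hbk : b' k = b k := Function.update_of_ne hki _ b
      rw [sortedAbs_eq, hσj', hb'i, habs', hbk]
      have : m ≤ |b k| := by
        apply Finset.min'_le
        rw [hT]
        exact Finset.mem_image_of_mem _ (by rw [hsuppdef, Finset.mem_filter]; exact hk)
      linarith
    have hlamj' : lam j' ≤ lam r := hlam_anti r j' (by omega)
    have hJ := slopeObj_update_le d y lam hlam_anti b i (t * s)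
    have hmin := hbstar y b'
    rw [← hb] at hmin
    rw [← hb', ← hj'] at hJ
    rw [habs', hb0, abs_zero] at hJ
    have hcontra : (0:ℝ) ≤ (1/2) * ((y i - d i * (t * s)) ^ 2 - (y i - d i * 0) ^ 2)
        + lam j' * (t - 0) := by linarith
    have expand : (y i - d i * (t * s)) ^ 2 - (y i - d i * 0) ^ 2
        = -2 * (d i) * t * (s * y i) + (d i) ^ 2 * t ^ 2 * (s * s) := by
      ring
    have hss : s * s = 1 := by rw [hs]; split <;> norm_num
    rw [expand, hss, hsy] at hcontra
    -- 0 ≤ -d t |y| + ½ d² t² + lam j' t, derive contradiction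
    have hde : (d i) ^ 2 * t ≤ (d i * |y i| - lam r) / 2 := by
      have h2 : (d i) ^ 2 * t ≤ (d i) ^ 2 * (ε / 2) :=
        mul_le_mul_of_nonneg_left htε (by positivity)
      have hd0 : (d i) ^ 2 ≠ 0 := (pow_pos (hd i) 2).ne'
      have h3 : (d i) ^ 2 * (ε / 2) = (d i * |y i| - lam r) / 2 := by
        rw [hε]; field_simp [(hd i).ne']
      linarith
    have f1 : lam j' * t ≤ lam r * t := mul_le_mul_of_nonneg_right hlamj' htpos.le
    have f2 : (d i) ^ 2 * t * t ≤ (d i * |y i| - lam r) / 2 * t :=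
      mul_le_mul_of_nonneg_right hde htpos.le
    have f3 : 0 < t * (d i * |y i| - lam r) := mul_pos htpos (by linarith)
    linarith
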